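/- arXiv:2312.07776 — 3 statements merged into one kernel-verified Lean document; each statement's English description precedes it below -/
import Mathlib

section
/- Let B be a commutative ring, (λⱼ)_{j∈J} a finite family of elements of B, f ∈ B[[U]], and P ∈ B[T]. With the pairing ⟨∑aᵢUⁱ, ∑bᵢTⁱ⟩ = ∑aᵢbᵢ, one has ⟨ f / ∏_{j∈J}(1−λⱼU), ∏_{j∈J}(T−λⱼ) · P ⟩ = ⟨ f, T^{#J} P ⟩, where each 1−λⱼU is inverted in B[[U]] (it is a unit). -/
/-- The pairing `B[[U]] × B[T] → B` pairing the coefficient of `Uⁱ` with the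
coefficient of `Tⁱ`. -/
noncomputable def seriesPolyPairing {B : Type*} [CommRing B]
    (f : PowerSeries B) (P : Polynomial B) : B :=
  P.sum fun i b => (PowerSeries.coeff i f) * b

/-- The pairing as a coefficient of `f * reflect n P`. -/
lemma seriesPolyPairing_eq_coeff {B : Type*} [CommRing B]
    (f : PowerSeries B) (P : Polynomial B) (n : ℕ) (hn : P.natDegree ≤ n) :
    seriesPolyPairing f P =
      PowerSeries.coeff n (f * ((P.reflect n : Polynomial B) : PowerSeries B)) := by
  rw [PowerSeries.coeff_mul, Finset.Nat.sum_antidiagonal_eq_sum_range_succ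
    (fun p q => PowerSeries.coeff p f * PowerSeries.coeff q ((P.reflect n : Polynomial B) : PowerSeries B))]
  have : ∀ i ∈ Finset.range (n + 1),
      PowerSeries.coeff i f *
        PowerSeries.coeff (n - i) ((P.reflect n : Polynomial B) : PowerSeries B) =
      PowerSeries.coeff i f * P.coeff i := by
    intro i hi
    rw [Finset.mem_range, Nat.lt_succ_iff] at hi
    rw [Polynomial.coeff_coe, Polynomial.coeff_reflect,
      Polynomial.revAt_le (Nat.sub_le _ _), Nat.sub_sub_self hi]
  rw [Finset.sum_congr rfl this]
  unfold seriesPolyPairing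
  rw [Polynomial.sum]
  refine Finset.sum_subset ?_ ?_
  · intro i hi
    rw [Finset.mem_range, Nat.lt_succ_iff]
    exact le_trans (Polynomial.le_natDegree_of_mem_supp i hi) hn
  · intro i _ hi
    rw [Polynomial.notMem_support_iff.mp hi, mul_zero]

lemma reflect_prod_X_sub_C {B : Type*} [CommRing B] {ι : Type*} (J : Finset ι) (lam : ι → B) :
    ((∏ j ∈ J, (Polynomial.X - Polynomial.C (lam j))).reflect J.card : PowerSeries B)
      = ∏ j ∈ J, (1 - PowerSeries.C (lam j) * PowerSeries.X) := by
  classical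
  induction J using Finset.induction_on with
  | empty => simp
  | @insert a s ha ih =>
    rw [Finset.prod_insert ha, Finset.prod_insert ha, Finset.card_insert_of_notMem ha,
      add_comm s.card 1, Polynomial.reflect_mul _ _ (Polynomial.natDegree_X_sub_C_le _)
        (le_trans (Polynomial.natDegree_prod_le _ _) (by
          apply le_trans (Finset.sum_le_card_nsmul s _ 1 (fun j _ =>
            Polynomial.natDegree_X_sub_C_le _)) (by simp))),
      Polynomial.coe_mul, ih]
    congr 1
    have : Polynomial.reflect 1 (Polynomial.X - Polynomial.C (lam a))
        = 1 - Polynomial.C (lam a) * Polynomial.X := by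
      ext i
      rcases i with _ | _ | i <;>
        simp [Polynomial.coeff_reflect, Polynomial.revAt, Function.Embedding.coeFn_mk]
    rw [this]
    push_cast
    ring

/-- For a finite family `(λⱼ)_{j ∈ J}` of elements of `B`, if `g` is the quotient of `f`
by the unit `∏_{j∈J} (1 − λⱼ U)` of `B[[U]]` (i.e. `g * ∏_{j∈J} (1 − λⱼU) = f`), then
`⟨g, ∏_{j∈J}(T−λⱼ) ⋅ P⟩ = ⟨f, T^{#J} P⟩`. -/
theorem stmt_3 {B : Type*} [CommRing B] {ι : Type*} (J : Finset ι) (lam : ι → B)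
    (f g : PowerSeries B) (P : Polynomial B)
    (hg : g * ∏ j ∈ J, (1 - PowerSeries.C (lam j) * PowerSeries.X) = f) :
    seriesPolyPairing g ((∏ j ∈ J, (Polynomial.X - Polynomial.C (lam j))) * P) =
      seriesPolyPairing f (Polynomial.X ^ J.card * P) := by
  classical
  have hprod : (∏ j ∈ J, (Polynomial.X - Polynomial.C (lam j))).natDegree ≤ J.card := by
    apply le_trans (Polynomial.natDegree_prod_le _ _)
    apply le_trans (Finset.sum_le_card_nsmul J _ 1 (fun j _ =>
      Polynomial.natDegree_X_sub_C_le _))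
    simp
  have hXpow : (Polynomial.X ^ J.card : Polynomial B).natDegree ≤ J.card :=
    Polynomial.natDegree_X_pow_le _
  rw [seriesPolyPairing_eq_coeff g _ (J.card + P.natDegree)
      (le_trans (Polynomial.natDegree_mul_le) (add_le_add hprod le_rfl)),
    seriesPolyPairing_eq_coeff f _ (J.card + P.natDegree)
      (le_trans (Polynomial.natDegree_mul_le) (add_le_add hXpow le_rfl)),
    Polynomial.reflect_mul _ _ hprod le_rfl,
    Polynomial.reflect_mul _ _ hXpow le_rfl]
  congr 1
  push_cast [Polynomial.reflect_monomial]
  rw [reflect_prod_X_sub_C, ← mul_assoc, hg]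
  simp [Polynomial.revAt_le]
end

section
/- Let λ = (λ₁,…,λ_l) be a partition of n and μ = (μ₁,…,μ_m) a composition of n. Define m_{λ,μ} as the number of subsets Z ⊆ {1,…,l}×{1,…,m} such that each row i contains exactly λᵢ elements of Z and each column j contains exactly μⱼ elements of Z. Let I₁,…,I_m be disjoint sets with #Iⱼ = μⱼ, Aⱼ the partition of Iⱼ into singletons, and let P̃_λ be the set of l-tuples (C₁,…,C_l) of pairwise disjoint subsets of I₁⊔…⊔I_m such that {C₁,…,C_l} ∈ J(A₁,…,A_m) and #Cᵢ = λᵢ for all i. Then #P̃_λ = (∏_{j=1}^m μⱼ!) · m_{λ,μ}. -/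
open Finset

/-- `m_{λ,μ}`: the number of subsets `Z ⊆ {1,…,l} × {1,…,m}` whose row `i` has exactly
`λ i` elements and whose column `j` has exactly `μ j` elements. -/
noncomputable def mCount (l m : ℕ) (lam : Fin l → ℕ) (mu : Fin m → ℕ) : ℕ :=
  Nat.card {Z : Finset (Fin l × Fin m) //
    (∀ i, (Z.filter fun z => z.1 = i).card = lam i) ∧
    (∀ j, (Z.filter fun z => z.2 = j).card = mu j)}

section helpers

variable {α : Type*} [DecidableEq α] {l m : ℕ}

lemma count_nonempty {κ : Type*} [Fintype κ] [DecidableEq κ]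
    (S : κ → Finset α)
    (hd : ∀ k k', k ≠ k' → Disjoint (S k) (S k')) (h1 : ∀ k, (S k).card ≤ 1) :
    (Finset.univ.filter fun k => (S k).Nonempty).card = (Finset.univ.biUnion S).card := by
  classical
  rw [Finset.card_biUnion (fun a _ b _ h => hd a b h), Finset.card_filter]
  refine Finset.sum_congr rfl fun k _ => ?_
  by_cases h : (S k).Nonempty
  · rw [if_pos h]
    exact (Nat.le_antisymm (h1 k) (Finset.card_pos.mpr h)).symm
  · rw [if_neg h, Finset.not_nonempty_iff_eq_empty.mp h, Finset.card_empty]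

lemma filter_fst_card (Z : Finset (Fin l × Fin m)) (i : Fin l) :
    (Z.filter fun z => z.1 = i).card = (Finset.univ.filter fun j => (i, j) ∈ Z).card := by
  refine Finset.card_bij' (fun p _ => p.2) (fun j _ => (i, j)) ?_ ?_ ?_ ?_
  · intro p hp
    simp only [Finset.mem_filter] at hp ⊢
    exact ⟨Finset.mem_univ _, by rw [← hp.2]; exact hp.1⟩
  · intro j hj
    simp only [Finset.mem_filter, Finset.mem_univ, true_and] at hj
    simp [hj]
  · intro p hp
    simp only [Finset.mem_filter] at hp
    obtain ⟨p1, p2⟩ := p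
    simp only at hp ⊢
    rw [hp.2]
  · intro j hj
    rfl

lemma filter_snd_card (Z : Finset (Fin l × Fin m)) (j : Fin m) :
    (Z.filter fun z => z.2 = j).card = (Finset.univ.filter fun i => (i, j) ∈ Z).card := by
  refine Finset.card_bij' (fun p _ => p.1) (fun i _ => (i, j)) ?_ ?_ ?_ ?_
  · intro p hp
    simp only [Finset.mem_filter] at hp ⊢
    exact ⟨Finset.mem_univ _, by rw [← hp.2]; exact hp.1⟩
  · intro i hi
    simp only [Finset.mem_filter, Finset.mem_univ, true_and] at hi
    simp [hi]
  · intro p hp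
    simp only [Finset.mem_filter] at hp
    obtain ⟨p1, p2⟩ := p
    simp only at hp ⊢
    rw [hp.2]
  · intro i hi
    rfl

end helpers

section core

variable {α : Type*} [DecidableEq α] {l m : ℕ} (I : Fin m → Finset α)

/-- The set of positions `(i,j)` where `C i` meets `I j`. -/
def Zof (C : Fin l → Finset α) : Finset (Fin l × Fin m) :=
  Finset.univ.filter fun p => ((C p.1) ∩ (I p.2)).Nonempty

lemma mem_Zof {C : Fin l → Finset α} {p : Fin l × Fin m} :
    p ∈ Zof I C ↔ ((C p.1) ∩ (I p.2)).Nonempty := by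
  simp [Zof]

lemma exrow (C : Fin l → Finset α)
    (hd : ∀ i i', i ≠ i' → Disjoint (C i) (C i'))
    (hc : Finset.univ.biUnion C = Finset.univ.biUnion I)
    {x : α} (hx : x ∈ Finset.univ.biUnion I) : ∃! i, x ∈ C i := by
  rw [← hc] at hx
  obtain ⟨i, -, hi⟩ := Finset.mem_biUnion.mp hx
  refine ⟨i, hi, fun i' hi' => ?_⟩
  by_contra hne
  exact absurd ((hd i' i hne).le_bot (Finset.mem_inter.mpr ⟨hi', hi⟩)) (by simp)

noncomputable def rowOf (C : Fin l → Finset α)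
    (hd : ∀ i i', i ≠ i' → Disjoint (C i) (C i'))
    (hc : Finset.univ.biUnion C = Finset.univ.biUnion I)
    (x : α) (hx : x ∈ Finset.univ.biUnion I) : Fin l :=
  (exrow I C hd hc hx).exists.choose

lemma rowOf_mem (C : Fin l → Finset α) (hd) (hc) (x : α) (hx : x ∈ Finset.univ.biUnion I) :
    x ∈ C (rowOf I C hd hc x hx) :=
  (exrow I C hd hc hx).exists.choose_spec

lemma rowOf_eq (C : Fin l → Finset α) (hd) (hc) (x : α) (hx : x ∈ Finset.univ.biUnion I)
    {i : Fin l} (hi : x ∈ C i) : rowOf I C hd hc x hx = i :=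
  (exrow I C hd hc hx).unique (rowOf_mem I C hd hc x hx) hi

lemma memU_of_mem_I {x : α} {j : Fin m} (hx : x ∈ I j) : x ∈ Finset.univ.biUnion I :=
  Finset.mem_biUnion.mpr ⟨j, Finset.mem_univ j, hx⟩

/-- The column equivalence associated to a tuple `C`. -/
noncomputable def colEquiv (C : Fin l → Finset α)
    (hd : ∀ i i', i ≠ i' → Disjoint (C i) (C i'))
    (hc : Finset.univ.biUnion C = Finset.univ.biUnion I)
    (h1 : ∀ i j, ((C i) ∩ (I j)).card ≤ 1) (j : Fin m) :
    {x // x ∈ I j} ≃ {i : Fin l // (i, j) ∈ Zof I C} :=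
  Equiv.ofBijective
    (fun x => ⟨rowOf I C hd hc x.1 (memU_of_mem_I I x.2),
      (mem_Zof I).mpr ⟨x.1, Finset.mem_inter.mpr
        ⟨rowOf_mem I C hd hc x.1 (memU_of_mem_I I x.2), x.2⟩⟩⟩)
    (by
      constructor
      · intro x y hxy
        have hx : x.1 ∈ C (rowOf I C hd hc x.1 (memU_of_mem_I I x.2)) :=
          rowOf_mem I C hd hc x.1 (memU_of_mem_I I x.2)
        have hy : y.1 ∈ C (rowOf I C hd hc y.1 (memU_of_mem_I I y.2)) :=
          rowOf_mem I C hd hc y.1 (memU_of_mem_I I y.2)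
        have hval : rowOf I C hd hc x.1 (memU_of_mem_I I x.2)
            = rowOf I C hd hc y.1 (memU_of_mem_I I y.2) := congrArg Subtype.val hxy
        refine Subtype.ext ?_
        refine Finset.card_le_one.mp
          (h1 (rowOf I C hd hc x.1 (memU_of_mem_I I x.2)) j) x.1 ?_ y.1 ?_
        · exact Finset.mem_inter.mpr ⟨hx, x.2⟩
        · rw [hval] at hx ⊢
          exact Finset.mem_inter.mpr ⟨hy, y.2⟩
      · rintro ⟨i, hij⟩
        obtain ⟨x, hx⟩ := (mem_Zof I).mp hij
        have hx1 := (Finset.mem_inter.mp hx).1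
        have hx2 := (Finset.mem_inter.mp hx).2
        exact ⟨⟨x, hx2⟩, Subtype.ext (rowOf_eq I C hd hc x (memU_of_mem_I I hx2) hx1)⟩)

lemma colEquiv_val (C : Fin l → Finset α) (hd) (hc) (h1) (j : Fin m) (x : {x // x ∈ I j}) :
    ((colEquiv I C hd hc h1 j x).1 : Fin l) = rowOf I C hd hc x.1 (memU_of_mem_I I x.2) := by
  simp only [colEquiv, Equiv.ofBijective_apply]
  rfl

/-- The tuple of sets associated to `Z` and a family of column equivalences. -/
def Gof (Z : Finset (Fin l × Fin m))
    (e : ∀ j : Fin m, {x // x ∈ I j} ≃ {i : Fin l // (i, j) ∈ Z}) (i : Fin l) : Finset α :=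
  Finset.univ.biUnion fun j =>
    ((I j).attach.filter fun x => ((e j x).1 = i)).image Subtype.val

lemma mem_Gof {Z : Finset (Fin l × Fin m)}
    {e : ∀ j : Fin m, {x // x ∈ I j} ≃ {i : Fin l // (i, j) ∈ Z}} {i : Fin l} {x : α} :
    x ∈ Gof I Z e i ↔ ∃ j, ∃ hx : x ∈ I j, ((e j ⟨x, hx⟩).1 = i) := by
  constructor
  · intro h
    simp only [Gof, Finset.mem_biUnion, Finset.mem_image, Finset.mem_filter,
      Finset.mem_attach, true_and, Finset.mem_univ] at h
    obtain ⟨j, a, ha, rfl⟩ := h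
    exact ⟨j, a.2, ha⟩
  · rintro ⟨j, hx, h⟩
    simp only [Gof, Finset.mem_biUnion, Finset.mem_image, Finset.mem_filter,
      Finset.mem_attach, true_and, Finset.mem_univ]
    exact ⟨j, ⟨x, hx⟩, h, rfl⟩

/-- Uniqueness of the column containing a point. -/
lemma col_unique (hIdisj : ∀ j j', j ≠ j' → Disjoint (I j) (I j')) {x : α} {j j' : Fin m} (hj : x ∈ I j) (hj' : x ∈ I j') : j = j' := by
  by_contra hne
  exact absurd ((hIdisj j j' hne).le_bot (Finset.mem_inter.mpr ⟨hj, hj'⟩)) (by simp)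

lemma Gof_disjoint (hIdisj : ∀ j j', j ≠ j' → Disjoint (I j) (I j')) {Z : Finset (Fin l × Fin m)}
    (e : ∀ j : Fin m, {x // x ∈ I j} ≃ {i : Fin l // (i, j) ∈ Z}) :
    ∀ i i', i ≠ i' → Disjoint (Gof I Z e i) (Gof I Z e i') := by
  intro i i' hne
  rw [Finset.disjoint_left]
  intro x hx hx'
  obtain ⟨j, hxj, hval⟩ := (mem_Gof I).mp hx
  obtain ⟨j', hxj', hval'⟩ := (mem_Gof I).mp hx'
  obtain rfl := col_unique I hIdisj hxj hxj'
  exact hne (hval ▸ hval' ▸ rfl)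

lemma Gof_cover {Z : Finset (Fin l × Fin m)}
    (e : ∀ j : Fin m, {x // x ∈ I j} ≃ {i : Fin l // (i, j) ∈ Z}) :
    Finset.univ.biUnion (Gof I Z e) = Finset.univ.biUnion I := by
  ext x
  simp only [Finset.mem_biUnion, Finset.mem_univ, true_and]
  constructor
  · rintro ⟨i, hi⟩
    obtain ⟨j, hxj, -⟩ := (mem_Gof I).mp hi
    exact ⟨j, hxj⟩
  · rintro ⟨j, hxj⟩
    exact ⟨(e j ⟨x, hxj⟩).1, (mem_Gof I).mpr ⟨j, hxj, rfl⟩⟩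

lemma Gof_inter_card (hIdisj : ∀ j j', j ≠ j' → Disjoint (I j) (I j')) {Z : Finset (Fin l × Fin m)}
    (e : ∀ j : Fin m, {x // x ∈ I j} ≃ {i : Fin l // (i, j) ∈ Z}) (i : Fin l) (j : Fin m) :
    ((Gof I Z e i) ∩ (I j)).card ≤ 1 := by
  refine Finset.card_le_one.mpr fun x hx y hy => ?_
  obtain ⟨hx1, hx2⟩ := Finset.mem_inter.mp hx
  obtain ⟨hy1, hy2⟩ := Finset.mem_inter.mp hy
  obtain ⟨j₁, hxj₁, hvx⟩ := (mem_Gof I).mp hx1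
  obtain ⟨j₂, hyj₂, hvy⟩ := (mem_Gof I).mp hy1
  obtain rfl := col_unique I hIdisj hxj₁ hx2
  obtain rfl := col_unique I hIdisj hyj₂ hy2
  exact congrArg Subtype.val ((e _).injective (Subtype.ext (hvx.trans hvy.symm)))

lemma Gof_nonempty_iff (hIdisj : ∀ j j', j ≠ j' → Disjoint (I j) (I j')) {Z : Finset (Fin l × Fin m)}
    (e : ∀ j : Fin m, {x // x ∈ I j} ≃ {i : Fin l // (i, j) ∈ Z}) (i : Fin l) (j : Fin m) :
    ((Gof I Z e i) ∩ (I j)).Nonempty ↔ (i, j) ∈ Z := by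
  constructor
  · rintro ⟨x, hx⟩
    obtain ⟨hx1, hx2⟩ := Finset.mem_inter.mp hx
    obtain ⟨j₁, hxj₁, hvx⟩ := (mem_Gof I).mp hx1
    obtain rfl := col_unique I hIdisj hxj₁ hx2
    exact hvx ▸ (e _ ⟨x, hxj₁⟩).2
  · intro h
    refine ⟨((e j).symm ⟨i, h⟩).1, Finset.mem_inter.mpr ⟨?_, ((e j).symm ⟨i, h⟩).2⟩⟩
    refine (mem_Gof I).mpr ⟨j, ((e j).symm ⟨i, h⟩).2, ?_⟩
    have : (⟨((e j).symm ⟨i, h⟩).1, ((e j).symm ⟨i, h⟩).2⟩ : {x // x ∈ I j})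
        = (e j).symm ⟨i, h⟩ := rfl
    rw [this, Equiv.apply_symm_apply]

lemma Zof_Gof (hIdisj : ∀ j j', j ≠ j' → Disjoint (I j) (I j')) {Z : Finset (Fin l × Fin m)}
    (e : ∀ j : Fin m, {x // x ∈ I j} ≃ {i : Fin l // (i, j) ∈ Z}) :
    Zof I (Gof I Z e) = Z := by
  ext p
  rw [mem_Zof, Gof_nonempty_iff I hIdisj]

lemma Gof_card (hIdisj : ∀ j j', j ≠ j' → Disjoint (I j) (I j')) {Z : Finset (Fin l × Fin m)}
    (e : ∀ j : Fin m, {x // x ∈ I j} ≃ {i : Fin l // (i, j) ∈ Z}) (i : Fin l) :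
    (Gof I Z e i).card = (Z.filter fun z => z.1 = i).card := by
  classical
  have hd : ∀ j j', j ≠ j' → Disjoint ((Gof I Z e i) ∩ I j) ((Gof I Z e i) ∩ I j') :=
    fun j j' h => Finset.disjoint_of_subset_left Finset.inter_subset_right
      (Finset.disjoint_of_subset_right Finset.inter_subset_right (hIdisj j j' h))
  have h1 : ∀ j, ((Gof I Z e i) ∩ I j).card ≤ 1 := Gof_inter_card I hIdisj e i
  have hb : Finset.univ.biUnion (fun j => (Gof I Z e i) ∩ I j) = Gof I Z e i := by
    ext x
    simp only [Finset.mem_biUnion, Finset.mem_inter, Finset.mem_univ, true_and]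
    constructor
    · rintro ⟨j, hx, -⟩; exact hx
    · intro hx
      obtain ⟨j, hxj, -⟩ := (mem_Gof I).mp hx
      exact ⟨j, hx, hxj⟩
  have hcnt := count_nonempty (fun j => (Gof I Z e i) ∩ I j) hd h1
  rw [hb] at hcnt
  rw [← hcnt, filter_fst_card]
  congr 1
  ext j
  simp only [Finset.mem_filter, Finset.mem_univ, true_and]
  exact Gof_nonempty_iff I hIdisj e i j

lemma Zof_row_card (hIdisj : ∀ j j', j ≠ j' → Disjoint (I j) (I j'))
    {C : Fin l → Finset α}
    (hc : Finset.univ.biUnion C = Finset.univ.biUnion I)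
    (h1 : ∀ i j, ((C i) ∩ (I j)).card ≤ 1) (i : Fin l) :
    ((Zof I C).filter fun z => z.1 = i).card = (C i).card := by
  classical
  have hd' : ∀ j j', j ≠ j' → Disjoint (C i ∩ I j) (C i ∩ I j') :=
    fun j j' h => Finset.disjoint_of_subset_left Finset.inter_subset_right
      (Finset.disjoint_of_subset_right Finset.inter_subset_right (hIdisj j j' h))
  have hb : Finset.univ.biUnion (fun j => C i ∩ I j) = C i := by
    ext x
    simp only [Finset.mem_biUnion, Finset.mem_inter, Finset.mem_univ, true_and]
    constructor
    · rintro ⟨j, hx, -⟩; exact hx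
    · intro hx
      have hxU : x ∈ Finset.univ.biUnion I := by
        rw [← hc]; exact Finset.mem_biUnion.mpr ⟨i, Finset.mem_univ i, hx⟩
      obtain ⟨j, -, hxj⟩ := Finset.mem_biUnion.mp hxU
      exact ⟨j, hx, hxj⟩
  have hcnt := count_nonempty (fun j => C i ∩ I j) hd' (fun j => h1 i j)
  rw [hb] at hcnt
  rw [filter_fst_card, ← hcnt]
  congr 1
  ext j
  simp only [Finset.mem_filter, Finset.mem_univ, true_and, mem_Zof]

lemma Zof_col_card {C : Fin l → Finset α}
    (hd : ∀ i i', i ≠ i' → Disjoint (C i) (C i'))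
    (hc : Finset.univ.biUnion C = Finset.univ.biUnion I)
    (h1 : ∀ i j, ((C i) ∩ (I j)).card ≤ 1) (j : Fin m) :
    ((Zof I C).filter fun z => z.2 = j).card = (I j).card := by
  classical
  have hd' : ∀ i i', i ≠ i' → Disjoint (C i ∩ I j) (C i' ∩ I j) :=
    fun i i' h => Finset.disjoint_of_subset_left Finset.inter_subset_left
      (Finset.disjoint_of_subset_right Finset.inter_subset_left (hd i i' h))
  have hb : Finset.univ.biUnion (fun i => C i ∩ I j) = I j := by
    ext x
    simp only [Finset.mem_biUnion, Finset.mem_inter, Finset.mem_univ, true_and]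
    constructor
    · rintro ⟨i, -, hx⟩; exact hx
    · intro hx
      have hxU : x ∈ Finset.univ.biUnion C := by
        rw [hc]; exact memU_of_mem_I I hx
      obtain ⟨i, -, hxi⟩ := Finset.mem_biUnion.mp hxU
      exact ⟨i, hxi, hx⟩
  have hcnt := count_nonempty (fun i => C i ∩ I j) hd' (fun i => h1 i j)
  rw [hb] at hcnt
  rw [filter_snd_card, ← hcnt]
  congr 1
  ext i
  simp only [Finset.mem_filter, Finset.mem_univ, true_and, mem_Zof]

lemma heq_cols {Z Z' : Finset (Fin l × Fin m)} (h : Z = Z')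
    (e : ∀ j : Fin m, {x // x ∈ I j} ≃ {i : Fin l // (i, j) ∈ Z})
    (e' : ∀ j : Fin m, {x // x ∈ I j} ≃ {i : Fin l // (i, j) ∈ Z'})
    (hv : ∀ j x, ((e j x).1 : Fin l) = ((e' j x).1)) : HEq e e' := by
  subst h
  exact heq_of_eq (funext fun j => Equiv.ext fun x => Subtype.ext (hv j x))

/-- The main bijection. -/
noncomputable def keyEquiv (lam : Fin l → ℕ) (mu : Fin m → ℕ)
    (hIcard : ∀ j, (I j).card = mu j)
    (hIdisj : ∀ j j', j ≠ j' → Disjoint (I j) (I j')) :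
    {C : Fin l → Finset α //
        (∀ i i', i ≠ i' → Disjoint (C i) (C i')) ∧
        (Finset.univ.biUnion C = Finset.univ.biUnion I) ∧
        (∀ i j, ((C i) ∩ (I j)).card ≤ 1) ∧
        (∀ i, (C i).card = lam i)} ≃
      (Σ Z : {Z : Finset (Fin l × Fin m) //
        (∀ i, (Z.filter fun z => z.1 = i).card = lam i) ∧
        (∀ j, (Z.filter fun z => z.2 = j).card = mu j)},
        ∀ j : Fin m, {x // x ∈ I j} ≃ {i : Fin l // (i, j) ∈ Z.1}) where
  toFun C := ⟨⟨Zof I C.1,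
      fun i => by rw [Zof_row_card I hIdisj C.2.2.1 C.2.2.2.1]; exact C.2.2.2.2 i,
      fun j => by rw [Zof_col_card I C.2.1 C.2.2.1 C.2.2.2.1]; exact hIcard j⟩,
    fun j => colEquiv I C.1 C.2.1 C.2.2.1 C.2.2.2.1 j⟩
  invFun y := ⟨Gof I y.1.1 y.2,
    Gof_disjoint I hIdisj y.2, Gof_cover I y.2, Gof_inter_card I hIdisj y.2,
    fun i => by rw [Gof_card I hIdisj y.2 i]; exact y.1.2.1 i⟩
  left_inv C := by
    apply Subtype.ext
    funext i
    ext x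
    rw [mem_Gof I]
    constructor
    · rintro ⟨j, hxj, hval⟩
      rw [colEquiv_val] at hval
      rw [← hval]
      exact rowOf_mem I C.1 C.2.1 C.2.2.1 x (memU_of_mem_I I hxj)
    · intro hx
      have hxU : x ∈ Finset.univ.biUnion I := by
        rw [← C.2.2.1]; exact Finset.mem_biUnion.mpr ⟨i, Finset.mem_univ i, hx⟩
      obtain ⟨j, -, hxj⟩ := Finset.mem_biUnion.mp hxU
      refine ⟨j, hxj, ?_⟩
      rw [colEquiv_val]
      exact rowOf_eq I C.1 C.2.1 C.2.2.1 x _ hx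
  right_inv y := by
    obtain ⟨⟨Zv, hZ⟩, e⟩ := y
    have hzz : Zof I (Gof I Zv e) = Zv := Zof_Gof I hIdisj e
    refine Sigma.ext (Subtype.ext hzz) (heq_cols I hzz _ _ ?_)
    intro j x
    rw [colEquiv_val]
    apply rowOf_eq
    exact (mem_Gof I).mpr ⟨j, x.2, rfl⟩

end core

/-- Let `λ` be a partition of `n`, `μ = (μ₁,…,μ_m)` a composition of `n`,
`I₁,…,I_m` disjoint sets with `#Iⱼ = μⱼ` and `Aⱼ` the partition of `Iⱼ` into singletons.
Then the number of `l`-tuples `(C₁,…,C_l)` of pairwise disjoint subsets of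
`I₁ ⊔ … ⊔ I_m` with `{C₁,…,C_l} ∈ J(A₁,…,A_m)` (i.e. the `Cᵢ` cover `I₁ ⊔ … ⊔ I_m` and
each `Cᵢ` meets each `Iⱼ` in at most one point) and `#Cᵢ = λᵢ` equals
`(∏ⱼ μⱼ!) ⋅ m_{λ,μ}`. -/
theorem stmt_7 {α : Type*} [DecidableEq α] (n l m : ℕ)
    (lam : Fin l → ℕ) (hlam_pos : ∀ i, 0 < lam i) (hlam_anti : Antitone lam)
    (hlam_sum : ∑ i, lam i = n)
    (mu : Fin m → ℕ) (hmu_pos : ∀ j, 0 < mu j) (hmu_sum : ∑ j, mu j = n)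
    (I : Fin m → Finset α) (hIcard : ∀ j, (I j).card = mu j)
    (hIdisj : ∀ j j', j ≠ j' → Disjoint (I j) (I j')) :
    Nat.card {C : Fin l → Finset α //
        (∀ i i', i ≠ i' → Disjoint (C i) (C i')) ∧
        (Finset.univ.biUnion C = Finset.univ.biUnion I) ∧
        (∀ i j, ((C i) ∩ (I j)).card ≤ 1) ∧
        (∀ i, (C i).card = lam i)} =
      (∏ j, (mu j).factorial) * mCount l m lam mu := by

  classical
  rw [Nat.card_congr (keyEquiv I lam mu hIcard hIdisj)]
  rw [Nat.card_eq_fintype_card, Fintype.card_sigma]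
  have hfib : ∀ Z : {Z : Finset (Fin l × Fin m) //
      (∀ i, (Z.filter fun z => z.1 = i).card = lam i) ∧
      (∀ j, (Z.filter fun z => z.2 = j).card = mu j)},
      Fintype.card (∀ j : Fin m, {x // x ∈ I j} ≃ {i : Fin l // (i, j) ∈ Z.1})
        = ∏ j, (mu j).factorial := by
    intro Z
    rw [Fintype.card_pi]
    refine Finset.prod_congr rfl fun j _ => ?_
    have h1 : Fintype.card {x // x ∈ I j} = mu j := by
      rw [Fintype.card_coe, hIcard]
    have h2 : Fintype.card {i : Fin l // (i, j) ∈ Z.1} = mu j := by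
      rw [Fintype.card_subtype, ← filter_snd_card]
      exact Z.2.2 j
    rw [Fintype.card_equiv (Fintype.equivOfCardEq (h1.trans h2.symm)), h1]
  rw [Finset.sum_congr rfl (fun Z _ => hfib Z), Finset.sum_const, Finset.card_univ,
    smul_eq_mul, mCount, Nat.card_eq_fintype_card, Nat.mul_comm]
end

section
/- Order the partitions of an integer n by the reverse lexicographic order. Then the matrix (m_{λᵀ, μ})_{λ,μ}, where λ and μ range over the partitions of n and λᵀ denotes the conjugate partition, is upper triangular with 1's on the diagonal; in particular this matrix is invertible over ℤ. -/
open Finset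

/-- `m_{a,b}` for two lists of row/column sums: the number of 0-1 matrices (coded as
finite subsets `Z` of `ℕ × ℕ`) whose `i`-th row has exactly `a_i` elements and whose
`j`-th column has exactly `b_j` elements (rows and columns beyond the lengths of the
lists being empty). -/
noncomputable def mList (a b : List ℕ) : ℕ :=
  Nat.card {Z : Finset (ℕ × ℕ) //
    (∀ i, (Z.filter fun z => z.1 = i).card = a.getD i 0) ∧
    (∀ j, (Z.filter fun z => z.2 = j).card = b.getD j 0)}

/-- The conjugate partition: `(λᵀ)ᵢ = #{j : λⱼ ≥ i}` (transpose of the Young diagram). -/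
def conjList (a : List ℕ) : List ℕ :=
  (List.range (a.getD 0 0)).map fun i => (a.filter fun x => i + 1 ≤ x).length

/-- The parts of a partition of `n`, listed in (weakly) decreasing order. -/
def sortedParts {n : ℕ} (p : n.Partition) : List ℕ := (p.parts.sort (· ≤ ·)).reverse

namespace Stmt9Aux

def rr (a : List ℕ) (i : ℕ) : ℕ := (a.filter fun x => i + 1 ≤ x).length

lemma rr_le_length (a : List ℕ) (i : ℕ) : rr a i ≤ a.length :=
  List.length_filter_le _ _

lemma getD_le_of_forall {t : List ℕ} {x : ℕ} (h : ∀ y ∈ t, y ≤ x) (j : ℕ) :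
    t.getD j 0 ≤ x := by
  rcases lt_or_ge j t.length with hj | hj
  · rw [List.getD_eq_getElem _ _ hj]; exact h _ (List.getElem_mem hj)
  · rw [List.getD_eq_default _ _ hj]; exact Nat.zero_le _

lemma rr_eq_zero {a : List ℕ} {N i : ℕ} (hN : ∀ x ∈ a, x ≤ N) (hi : N ≤ i) :
    rr a i = 0 := by
  rw [rr, List.length_eq_zero_iff, List.filter_eq_nil_iff]
  intro x hx
  have := hN x hx
  simp only [decide_eq_true_eq]
  omega

lemma conjList_getD {a : List ℕ} (ha : a.Pairwise (· ≥ ·)) (i : ℕ) :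
    (conjList a).getD i 0 = rr a i := by
  rcases lt_or_ge i (a.getD 0 0) with hi | hi
  · rw [conjList, List.getD_eq_getElem]
    · simp [rr]
    · simpa using hi
  · rw [conjList, List.getD_eq_default]
    · refine (rr_eq_zero (N := a.getD 0 0) ?_ hi).symm
      intro x hx
      cases a with
      | nil => simp at hx
      | cons y t =>
        rcases List.mem_cons.1 hx with rfl | hx
        · simp
        · exact (List.pairwise_cons.1 ha).1 x hx
    · simpa using hi

lemma lt_rr_iff {a : List ℕ} (ha : a.Pairwise (· ≥ ·)) (i j : ℕ) :
    j < rr a i ↔ i + 1 ≤ a.getD j 0 := by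
  induction a generalizing j with
  | nil => simp [rr]
  | cons x t ih =>
    have hxt : ∀ y ∈ t, y ≤ x := (List.pairwise_cons.1 ha).1
    have hts : t.Pairwise (· ≥ ·) := (List.pairwise_cons.1 ha).2
    by_cases hx : i + 1 ≤ x
    · have hr : rr (x :: t) i = rr t i + 1 := by
        simp [rr, List.filter_cons, show i < x by omega]
      cases j with
      | zero => simp [hr, hx]
      | succ j => simp only [hr, List.getD_cons_succ]; rw [← ih hts]; omega
    · have hr : rr (x :: t) i = 0 := by
        refine rr_eq_zero (N := x) ?_ (by omega)
        intro y hy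
        rcases List.mem_cons.1 hy with rfl | hy
        · exact le_refl _
        · exact hxt y hy
      rw [hr]
      cases j with
      | zero => simp [hx]
      | succ j =>
        simp only [List.getD_cons_succ]
        have := getD_le_of_forall hxt j
        constructor <;> intro h <;> omega

lemma filter_lt_card (k m : ℕ) : ((range k).filter fun j => j < m).card = min m k := by
  have : ((range k).filter fun j => j < m) = range (min m k) := by
    ext j; simp; omega
  rw [this, card_range]

lemma sum_min {a : List ℕ} (ha : a.Pairwise (· ≥ ·)) {N : ℕ} (hN : ∀ x ∈ a, x ≤ N) (k : ℕ) :
    ∑ i ∈ range N, min (rr a i) k = ∑ j ∈ range k, a.getD j 0 := by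
  have h1 : ∀ i, min (rr a i) k = ∑ j ∈ range k, if j < rr a i then 1 else 0 := by
    intro i; rw [← filter_lt_card k (rr a i), card_filter]
  have h2 : ∀ j, a.getD j 0 = ∑ i ∈ range N, if j < rr a i then 1 else 0 := by
    intro j
    have : ∀ i, (j < rr a i) = (i < a.getD j 0) := by
      intro i; rw [lt_rr_iff ha]; simp
    simp_rw [this]
    rw [← card_filter, filter_lt_card, min_eq_left (getD_le_of_forall hN j)]
  simp_rw [h1]
  rw [Finset.sum_comm]
  exact Finset.sum_congr rfl fun j _ => (h2 j).symm


section Z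

variable (Z : Finset (ℕ × ℕ))

def tt (i k : ℕ) : ℕ := (Z.filter fun z => z.1 = i ∧ z.2 < k).card

variable {Z}

lemma mem_fst_lt {r' : ℕ → ℕ} (hr : ∀ i, (Z.filter fun z => z.1 = i).card = r' i)
    {N : ℕ} (hN : ∀ i, N ≤ i → r' i = 0) {z : ℕ × ℕ} (hz : z ∈ Z) : z.1 < N := by
  by_contra h
  have h0 : (Z.filter fun w => w.1 = z.1).card = 0 := by rw [hr]; exact hN _ (by omega)
  have : z ∈ Z.filter fun w => w.1 = z.1 := mem_filter.2 ⟨hz, rfl⟩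
  rw [Finset.card_eq_zero.1 h0] at this
  simp at this

lemma tt_le_min {r' : ℕ → ℕ} (hr : ∀ i, (Z.filter fun z => z.1 = i).card = r' i)
    (i k : ℕ) : tt Z i k ≤ min (r' i) k := by
  refine le_min ?_ ?_
  · rw [← hr i]
    exact card_le_card fun z hz => by
      simp only [mem_filter] at hz ⊢; exact ⟨hz.1, hz.2.1⟩
  · refine le_trans (Finset.card_le_card_of_injOn Prod.snd ?_ ?_) (by rw [card_range])
    · intro z hz
      simp only [coe_filter, Set.mem_setOf_eq] at hz
      exact mem_range.2 hz.2.2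
    · intro z hz w hw h
      simp only [coe_filter, Set.mem_setOf_eq] at hz hw
      exact Prod.ext (hz.2.1.trans hw.2.1.symm) h

lemma sum_tt {r' : ℕ → ℕ} (hr : ∀ i, (Z.filter fun z => z.1 = i).card = r' i)
    {N : ℕ} (hN : ∀ i, N ≤ i → r' i = 0) (k : ℕ) :
    (Z.filter fun z => z.2 < k).card = ∑ i ∈ range N, tt Z i k := by
  rw [Finset.card_eq_sum_card_fiberwise
    (f := Prod.fst) (t := range N)
    (fun z hz => mem_range.2 (mem_fst_lt hr hN (mem_filter.1 hz).1))]
  refine Finset.sum_congr rfl fun i _ => ?_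
  rw [tt, Finset.filter_filter]
  exact congrArg _ (Finset.filter_congr fun z _ => by tauto)

lemma sum_col {b : List ℕ} (hc : ∀ j, (Z.filter fun z => z.2 = j).card = b.getD j 0)
    (k : ℕ) : (Z.filter fun z => z.2 < k).card = ∑ j ∈ range k, b.getD j 0 := by
  rw [Finset.card_eq_sum_card_fiberwise
    (f := Prod.snd) (t := range k)
    (fun z hz => mem_range.2 (mem_filter.1 hz).2)]
  refine Finset.sum_congr rfl fun j hj => ?_
  rw [Finset.filter_filter, ← hc j]
  exact congrArg _ (Finset.filter_congr fun z _ => by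
    simp only [mem_range] at hj
    constructor
    · rintro ⟨-, h⟩; exact h
    · rintro h; exact ⟨by omega, h⟩)

lemma tt_succ (Z : Finset (ℕ × ℕ)) (i j : ℕ) :
    tt Z i (j + 1) = tt Z i j + if (i, j) ∈ Z then 1 else 0 := by
  have hsplit : (Z.filter fun z => z.1 = i ∧ z.2 < j + 1) =
      (Z.filter fun z => z.1 = i ∧ z.2 < j) ∪ (Z.filter fun z => z = (i, j)) := by
    rw [← Finset.filter_or]
    refine Finset.filter_congr fun z _ => ?_
    obtain ⟨x, y⟩ := z
    simp only [Prod.mk.injEq]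
    constructor
    · rintro ⟨rfl, h⟩
      rcases Nat.lt_succ_iff_lt_or_eq.1 h with h | rfl
      · exact Or.inl ⟨rfl, h⟩
      · exact Or.inr ⟨rfl, rfl⟩
    · rintro (⟨rfl, h⟩ | ⟨rfl, rfl⟩) <;> omega
  rw [tt, hsplit, Finset.card_union_of_disjoint, Finset.filter_eq']
  · split_ifs with h <;> simp [tt]
  · rw [Finset.disjoint_left]
    intro z h1 h2
    simp only [mem_filter] at h1 h2
    obtain ⟨-, -, hlt⟩ := h1
    obtain ⟨-, rfl⟩ := h2
    omega

end Z

lemma le_sum_of_mem {a : List ℕ} {x : ℕ} (hx : x ∈ a) : x ≤ a.sum :=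
  List.single_le_sum (fun _ _ => Nat.zero_le _) _ hx

/-- Dominance: any 0-1 matrix with row sums `conjList a` and column sums `b`
forces the prefix sums of `b` to be below those of `a`. -/
lemma dominance {a b : List ℕ} (ha : a.Pairwise (· ≥ ·)) (Z : Finset (ℕ × ℕ))
    (hr : ∀ i, (Z.filter fun z => z.1 = i).card = (conjList a).getD i 0)
    (hc : ∀ j, (Z.filter fun z => z.2 = j).card = b.getD j 0) (k : ℕ) :
    ∑ j ∈ range k, b.getD j 0 ≤ ∑ j ∈ range k, a.getD j 0 := by
  set N := a.sum with hNdef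
  have hbound : ∀ x ∈ a, x ≤ N := fun x hx => le_sum_of_mem hx
  have hr' : ∀ i, (Z.filter fun z => z.1 = i).card = rr a i := by
    intro i; rw [hr i, conjList_getD ha]
  have hN : ∀ i, N ≤ i → rr a i = 0 := fun i hi => rr_eq_zero hbound hi
  calc ∑ j ∈ range k, b.getD j 0 = (Z.filter fun z => z.2 < k).card := (sum_col hc k).symm
    _ = ∑ i ∈ range N, tt Z i k := sum_tt hr' hN k
    _ ≤ ∑ i ∈ range N, min (rr a i) k := Finset.sum_le_sum fun i _ => tt_le_min hr' i k
    _ = ∑ j ∈ range k, a.getD j 0 := sum_min ha hbound k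

/-- Rigidity: a 0-1 matrix with row sums `conjList a` and column sums `a` is unique. -/
lemma mem_iff {a : List ℕ} (ha : a.Pairwise (· ≥ ·)) (Z : Finset (ℕ × ℕ))
    (hr : ∀ i, (Z.filter fun z => z.1 = i).card = (conjList a).getD i 0)
    (hc : ∀ j, (Z.filter fun z => z.2 = j).card = a.getD j 0) (z : ℕ × ℕ) :
    z ∈ Z ↔ z.2 < rr a z.1 := by
  set N := a.sum with hNdef
  have hbound : ∀ x ∈ a, x ≤ N := fun x hx => le_sum_of_mem hx
  have hr' : ∀ i, (Z.filter fun z => z.1 = i).card = rr a i := by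
    intro i; rw [hr i, conjList_getD ha]
  have hN : ∀ i, N ≤ i → rr a i = 0 := fun i hi => rr_eq_zero hbound hi
  have key : ∀ k, ∀ i ∈ range N, tt Z i k = min (rr a i) k := by
    intro k
    have hsum : ∑ i ∈ range N, tt Z i k = ∑ i ∈ range N, min (rr a i) k := by
      rw [← sum_tt hr' hN k, sum_col hc k, sum_min ha hbound k]
    exact (Finset.sum_eq_sum_iff_of_le fun i _ => tt_le_min hr' i k).1 hsum
  obtain ⟨i, j⟩ := z
  simp only
  rcases lt_or_ge i N with hi | hi
  · have h1 := key (j + 1) i (mem_range.2 hi)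
    have h2 := key j i (mem_range.2 hi)
    rw [tt_succ] at h1
    by_cases hz : (i, j) ∈ Z
    · simp only [hz, if_true] at h1
      simp only [hz, true_iff]
      omega
    · simp only [hz, if_false] at h1
      simp only [hz, false_iff]
      omega
  · have h0 : rr a i = 0 := hN i hi
    simp only [h0]
    constructor
    · intro hz
      exact absurd (mem_fst_lt hr' hN hz) (by omega)
    · omega

/-- The canonical (unique) 0-1 matrix: the Young diagram of `conjList a`. -/
def Z0 (a : List ℕ) : Finset (ℕ × ℕ) :=
  ((range (a.sum + a.length)) ×ˢ (range (a.sum + a.length))).filter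
    fun z => z.2 < rr a z.1

lemma mem_Z0 (a : List ℕ) (z : ℕ × ℕ) : z ∈ Z0 a ↔ z.2 < rr a z.1 := by
  obtain ⟨i, j⟩ := z
  simp only [Z0, mem_filter, mem_product, mem_range]
  constructor
  · rintro ⟨-, h⟩; exact h
  · intro h
    refine ⟨⟨?_, ?_⟩, h⟩
    · by_contra hi
      rw [rr_eq_zero (N := a.sum + a.length) (fun x hx => by
        have := le_sum_of_mem hx; omega) (by omega)] at h
      omega
    · have := rr_le_length a i; omega

lemma Z0_row (a : List ℕ) (i : ℕ) :
    ((Z0 a).filter fun z => z.1 = i).card = rr a i := by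
  have : ((Z0 a).filter fun z => z.1 = i) = {i} ×ˢ range (rr a i) := by
    ext ⟨x, y⟩
    simp only [mem_filter, mem_Z0, mem_product, mem_singleton, mem_range]
    constructor
    · rintro ⟨h, rfl⟩; exact ⟨rfl, h⟩
    · rintro ⟨rfl, h⟩; exact ⟨h, rfl⟩
  rw [this, card_product, card_singleton, card_range, one_mul]

lemma Z0_col {a : List ℕ} (ha : a.Pairwise (· ≥ ·)) (j : ℕ) :
    ((Z0 a).filter fun z => z.2 = j).card = a.getD j 0 := by
  have : ((Z0 a).filter fun z => z.2 = j) = range (a.getD j 0) ×ˢ {j} := by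
    ext ⟨x, y⟩
    simp only [mem_filter, mem_Z0, mem_product, mem_singleton, mem_range]
    constructor
    · rintro ⟨h, rfl⟩
      have := (lt_rr_iff ha x y).1 h
      exact ⟨by omega, rfl⟩
    · rintro ⟨h, rfl⟩
      exact ⟨(lt_rr_iff ha x y).2 (by omega), rfl⟩
  rw [this, card_product, card_singleton, card_range, mul_one]


lemma lex_of_getD : ∀ (k : ℕ) {b a : List ℕ},
    (∀ j, j < k → b.getD j 0 = a.getD j 0) → b.getD k 0 < a.getD k 0 →
    List.Lex (· < ·) b a := by
  intro k
  induction k with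
  | zero =>
    intro b a _ hk
    cases a with
    | nil => simp at hk
    | cons x a' =>
      cases b with
      | nil => exact List.Lex.nil
      | cons y b' => exact List.Lex.rel (by simpa using hk)
  | succ k ih =>
    intro b a h hk
    cases a with
    | nil => simp at hk
    | cons x a' =>
      cases b with
      | nil => exact List.Lex.nil
      | cons y b' =>
        have h0 : y = x := by simpa using h 0 (Nat.succ_pos k)
        subst h0
        exact List.Lex.cons
          (ih (fun j hj => by simpa using h (j + 1) (by omega)) (by simpa using hk))

lemma eq_of_getD : ∀ {b a : List ℕ}, (∀ x ∈ b, 0 < x) → (∀ x ∈ a, 0 < x) →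
    (∀ j, b.getD j 0 = a.getD j 0) → b = a := by
  intro b
  induction b with
  | nil =>
    intro a _ hap h
    cases a with
    | nil => rfl
    | cons x a' =>
      have h1 := h 0
      have h2 := hap x (by simp)
      simp at h1
      omega
  | cons y b' ih =>
    intro a hbp hap h
    cases a with
    | nil =>
      have h1 := h 0
      have h2 := hbp y (by simp)
      simp at h1
      omega
    | cons x a' =>
      have h0 : y = x := by simpa using h 0
      subst h0
      rw [ih (fun x hx => hbp x (List.mem_cons_of_mem _ hx))
        (fun x hx => hap x (List.mem_cons_of_mem _ hx))
        (fun j => by simpa using h (j + 1))]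

lemma eq_or_lex {b a : List ℕ} (hbp : ∀ x ∈ b, 0 < x) (hap : ∀ x ∈ a, 0 < x)
    (h : ∀ k, ∑ j ∈ range k, b.getD j 0 ≤ ∑ j ∈ range k, a.getD j 0) :
    b = a ∨ List.Lex (· < ·) b a := by
  by_cases hba : b = a
  · exact Or.inl hba
  right
  have hex : ∃ k, b.getD k 0 ≠ a.getD k 0 := by
    by_contra hc
    push_neg at hc
    exact hba (eq_of_getD hbp hap hc)
  classical
  have hspec : b.getD (Nat.find hex) 0 ≠ a.getD (Nat.find hex) 0 := Nat.find_spec hex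
  have hmin : ∀ j, j < Nat.find hex → b.getD j 0 = a.getD j 0 :=
    fun j hj => not_not.1 (Nat.find_min hex hj)
  have hpre : ∑ j ∈ range (Nat.find hex), b.getD j 0 =
      ∑ j ∈ range (Nat.find hex), a.getD j 0 :=
    Finset.sum_congr rfl fun j hj => hmin j (mem_range.1 hj)
  have h1 := h (Nat.find hex + 1)
  rw [Finset.sum_range_succ, Finset.sum_range_succ, hpre] at h1
  exact lex_of_getD (Nat.find hex) hmin (by omega)


lemma mList_diag {a : List ℕ} (ha : a.Pairwise (· ≥ ·)) : mList (conjList a) a = 1 := by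
  rw [mList, Nat.card_eq_one_iff_unique]
  refine ⟨⟨fun Z Z' => ?_⟩, ⟨⟨Z0 a,
    fun i => (Z0_row a i).trans (conjList_getD ha i).symm, fun j => Z0_col ha j⟩⟩⟩
  obtain ⟨Z, h1, h2⟩ := Z
  obtain ⟨Z', h1', h2'⟩ := Z'
  exact Subtype.ext (Finset.ext fun z =>
    (mem_iff ha Z h1 h2 z).trans (mem_iff ha Z' h1' h2' z).symm)

lemma mList_dominance {a b : List ℕ} (ha : a.Pairwise (· ≥ ·))
    (h : mList (conjList a) b ≠ 0) (k : ℕ) :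
    ∑ j ∈ range k, b.getD j 0 ≤ ∑ j ∈ range k, a.getD j 0 := by
  rw [mList] at h
  obtain ⟨⟨Z, h1, h2⟩⟩ := (Nat.card_ne_zero.1 h).1
  exact dominance ha Z h1 h2 k

end Stmt9Aux


namespace Stmt9Aux

lemma sortedParts_sorted {n : ℕ} (p : n.Partition) :
    (sortedParts p).Pairwise (· ≥ ·) := by
  have h := Multiset.pairwise_sort (s := p.parts) (r := (· ≤ ·))
  rw [sortedParts, List.pairwise_reverse]
  exact h

lemma sortedParts_pos {n : ℕ} (p : n.Partition) : ∀ x ∈ sortedParts p, 0 < x := by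
  intro x hx
  rw [sortedParts, List.mem_reverse, Multiset.mem_sort] at hx
  exact p.parts_pos hx

lemma sortedParts_injective {n : ℕ} :
    Function.Injective (fun p : n.Partition => sortedParts p) := by
  intro p q h
  simp only [sortedParts] at h
  have h2 : p.parts.sort (· ≤ ·) = q.parts.sort (· ≤ ·) := by
    have := congrArg List.reverse h
    simpa using this
  have h3 : p.parts = q.parts := by
    rw [← Multiset.sort_eq (s := p.parts) (r := (· ≤ ·)), ← Multiset.sort_eq (s := q.parts) (r := (· ≤ ·)), h2]
  cases p; cases q; simpa using h3

end Stmt9Aux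


/-- The matrix `(m_{λᵀ,μ})`, with `λ, μ` running over the partitions of `n` ordered by
reverse lexicographic order, is upper triangular with `1`'s on the diagonal: the
diagonal entries `m_{λᵀ,λ}` equal `1`, off-diagonal entries `m_{λᵀ,μ}` vanish unless
`μ` precedes `λ` lexicographically; in particular the matrix is invertible over `ℤ`. -/
theorem stmt_9 (n : ℕ) [DecidableEq (Nat.Partition n)] :
    (∀ p : Nat.Partition n, mList (conjList (sortedParts p)) (sortedParts p) = 1) ∧
    (∀ p q : Nat.Partition n, mList (conjList (sortedParts p)) (sortedParts q) ≠ 0 →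
      q = p ∨ List.Lex (· < ·) (sortedParts q) (sortedParts p)) ∧
    IsUnit (Matrix.det (Matrix.of fun p q : Nat.Partition n =>
      ((mList (conjList (sortedParts p)) (sortedParts q) : ℤ)))) := by
  have part1 : ∀ p : Nat.Partition n, mList (conjList (sortedParts p)) (sortedParts p) = 1 :=
    fun p => Stmt9Aux.mList_diag (Stmt9Aux.sortedParts_sorted p)
  have part2 : ∀ p q : Nat.Partition n,
      mList (conjList (sortedParts p)) (sortedParts q) ≠ 0 →
      q = p ∨ List.Lex (· < ·) (sortedParts q) (sortedParts p) := by
    intro p q h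
    rcases Stmt9Aux.eq_or_lex (Stmt9Aux.sortedParts_pos q) (Stmt9Aux.sortedParts_pos p)
      (Stmt9Aux.mList_dominance (Stmt9Aux.sortedParts_sorted p) h) with h' | h'
    · exact Or.inl (Stmt9Aux.sortedParts_injective h')
    · exact Or.inr h'
  refine ⟨part1, part2, ?_⟩
  letI : LinearOrder (Nat.Partition n) :=
    LinearOrder.lift' (fun p : Nat.Partition n => sortedParts p) Stmt9Aux.sortedParts_injective
  set M : Matrix (Nat.Partition n) (Nat.Partition n) ℤ :=
    Matrix.of fun p q => ((mList (conjList (sortedParts p)) (sortedParts q) : ℤ)) with hM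
  have htri : M.BlockTriangular OrderDual.toDual := by
    intro p q hpq
    rw [OrderDual.toDual_lt_toDual] at hpq
    by_contra hMne
    have hne : mList (conjList (sortedParts p)) (sortedParts q) ≠ 0 := by
      intro h0
      apply hMne
      simp [hM, Matrix.of_apply, h0]
    have hpq' : List.Lex (· < ·) (sortedParts p) (sortedParts q) := hpq
    rcases part2 p q hne with rfl | hlex
    · exact lt_irrefl _ hpq
    · exact lt_asymm (show sortedParts p < sortedParts q from hpq')
        (show sortedParts q < sortedParts p from hlex)
  have hdet : M.det = 1 := by
    rw [Matrix.det_of_lowerTriangular M htri]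
    refine Finset.prod_eq_one fun p _ => ?_
    simp [hM, part1 p]
  exact hdet ▸ isUnit_one
end
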